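/- Let M = {1,2,3}. Define P = P(M, {{1,2}}), Q = P(M, {{1,2},{2,3}}), R = P(M, {{1,2},{1,3},{2,3}}) (reduced posets ordered by reverse inclusion). Then there exist surjective pp-morphisms h : P ⊎ P → Q and k : Q ⊎ Q → R. -/

import Mathlib

open Set Function

variable {α β γ : Type*}

/-- `Mset x` is the set of maximal elements (of the ambient poset) lying above `x`. -/
def Mset [PartialOrder α] (x : α) : Set α := {y | IsMax y ∧ x ≤ y}

/-- A pp-morphism: an order-preserving map `h` with `M(h x) = h[M x]` for all `x`. -/
def IsPP [PartialOrder α] [PartialOrder β] (h : α → β) : Prop :=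
  Monotone h ∧ ∀ x, Mset (h x) = h '' Mset x

/-- The reverse-inclusion partial order on a family of subsets. -/
def revPO (p : Set α → Prop) : PartialOrder {S : Set α // p S} :=
  PartialOrder.lift (fun A => OrderDual.toDual (A : Set α))
    (fun A B h => Subtype.ext (by simpa using h))

/-- Membership in the reduced poset `P(M, F)`: the base `M`, the singletons of elements
of `M`, and the members of `F`. -/
def RMem (M : Set α) (F : Set (Set α)) (S : Set α) : Prop :=
  S = M ∨ (∃ m ∈ M, S = {m}) ∨ S ∈ F

/-- The reduced poset `P(M, F)`, ordered by reverse inclusion. -/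
def Red (M : Set α) (F : Set (Set α)) := {S : Set α // RMem M F S}

instance (M : Set α) (F : Set (Set α)) : PartialOrder (Red M F) := revPO _

/-- The bottom element `M` of the reduced poset `P(M, F)`. -/
def botElem (M : Set α) (F : Set (Set α)) : Red M F := ⟨M, Or.inl rfl⟩

/-- The singleton element `{x}` (for `x ∈ M`) of the reduced poset `P(M, F)`. -/
def singElem (M : Set α) (F : Set (Set α)) {x : α} (hx : x ∈ M) : Red M F :=
  ⟨{x}, Or.inr (Or.inl ⟨x, hx, rfl⟩)⟩

section Aux

variable {M : Set α} {F F₁ F₂ : Set (Set α)}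

lemma red_le_iff {A B : Red M F} : A ≤ B ↔ B.1 ⊆ A.1 := Iff.rfl

/-- Good family: all members nonempty subsets of M. -/
def GoodF (M : Set α) (F : Set (Set α)) : Prop := ∀ S ∈ F, S.Nonempty ∧ S ⊆ M

lemma red_nonempty (hM : M.Nonempty) (hF : GoodF M F) (z : Red M F) : z.1.Nonempty := by
  rcases z.2 with h | ⟨m, _, h⟩ | h
  · rw [h]; exact hM
  · rw [h]; exact ⟨m, rfl⟩
  · exact (hF _ h).1

lemma red_isMax_iff (hM : M.Nonempty) (hF : GoodF M F) (y : Red M F) :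
    IsMax y ↔ ∃ m ∈ M, y.1 = {m} := by
  constructor
  · intro hmax
    have key : ∀ m ∈ M, m ∈ y.1 → y.1 = {m} := by
      intro m hmM hmy
      have h1 : y ≤ singElem M F hmM := by
        rw [red_le_iff]; exact Set.singleton_subset_iff.2 hmy
      have h2 := hmax h1
      rw [red_le_iff] at h2
      exact Set.Subset.antisymm h2 (Set.singleton_subset_iff.2 hmy)
    rcases y.2 with h | ⟨m, hmM, h⟩ | h
    · obtain ⟨m, hm⟩ := hM
      exact ⟨m, hm, key m hm (by rw [h]; exact hm)⟩
    · exact ⟨m, hmM, h⟩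
    · obtain ⟨⟨m, hm⟩, hsub⟩ := hF _ h
      exact ⟨m, hsub hm, key m (hsub hm) hm⟩
  · rintro ⟨m, hmM, hy⟩ z hz
    rw [red_le_iff] at hz ⊢
    rw [hy] at hz
    obtain ⟨n, hn⟩ := red_nonempty hM hF z
    have : n = m := hz hn
    rw [hy]
    intro p hp
    rw [Set.mem_singleton_iff] at hp
    subst hp
    exact this ▸ hn

lemma red_Mset_eq (hM : M.Nonempty) (hF : GoodF M F) (x : Red M F) :
    Mset x = {y : Red M F | ∃ m ∈ M, m ∈ x.1 ∧ y.1 = {m}} := by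
  ext y
  simp only [Mset, Set.mem_setOf_eq, red_isMax_iff hM hF, red_le_iff]
  constructor
  · rintro ⟨⟨m, hmM, hy⟩, hle⟩
    exact ⟨m, hmM, hle (hy ▸ rfl), hy⟩
  · rintro ⟨m, hmM, hmx, hy⟩
    exact ⟨⟨m, hmM, hy⟩, by rw [hy]; exact Set.singleton_subset_iff.2 hmx⟩

/-- Map induced by an injection of the base preserving structure. -/
def pmap (f : α → α) (hMf : f '' M = M) (hFf : ∀ S ∈ F₁, f '' S ∈ F₂) :
    Red M F₁ → Red M F₂ := fun S =>
  ⟨f '' S.1, by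
    rcases S.2 with h | ⟨m, hmM, h⟩ | h
    · exact Or.inl (by rw [h, hMf])
    · refine Or.inr (Or.inl ⟨f m, ?_, by rw [h, Set.image_singleton]⟩)
      rw [← hMf]; exact Set.mem_image_of_mem f hmM
    · exact Or.inr (Or.inr (hFf _ h))⟩

lemma pmap_pp (f : α → α) (hf : Function.Injective f) (hMf : f '' M = M)
    (hFf : ∀ S ∈ F₁, f '' S ∈ F₂) (hM : M.Nonempty)
    (hF₁ : GoodF M F₁) (hF₂ : GoodF M F₂) : IsPP (pmap f hMf hFf) := by
  constructor
  · intro A B hAB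
    rw [red_le_iff] at hAB ⊢
    exact Set.image_mono hAB
  · intro x
    rw [red_Mset_eq hM hF₁, red_Mset_eq hM hF₂]
    ext y
    simp only [Set.mem_setOf_eq, Set.mem_image]
    constructor
    · rintro ⟨n, hnM, hnx, hy⟩
      obtain ⟨m, hmx, rfl⟩ := (show n ∈ f '' x.1 from hnx)
      have hmM : m ∈ M := by
        rw [← hMf] at hnM
        obtain ⟨m', hm'M, hm'⟩ := hnM
        exact hf hm' ▸ hm'M
      refine ⟨singElem M F₁ hmM, ⟨m, hmM, hmx, rfl⟩, ?_⟩
      apply Subtype.ext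
      show f '' {m} = y.1
      rw [Set.image_singleton, hy]
    · rintro ⟨z, ⟨m, hmM, hmx, hz⟩, rfl⟩
      refine ⟨f m, ?_, Set.mem_image_of_mem f hmx, ?_⟩
      · rw [← hMf]; exact Set.mem_image_of_mem f hmM
      · show f '' z.1 = {f m}
        rw [hz, Set.image_singleton]

end Aux

section SumAux

variable [PartialOrder α] [PartialOrder β] [PartialOrder γ]

lemma isMax_inl_iff {a : α} : IsMax (Sum.inl a : α ⊕ β) ↔ IsMax a := by
  constructor
  · intro h b hb
    exact Sum.inl_le_inl_iff.1 (h (Sum.inl_le_inl_iff.2 hb))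
  · intro h c hc
    cases c with
    | inl b => exact Sum.inl_le_inl_iff.2 (h (Sum.inl_le_inl_iff.1 hc))
    | inr b => exact absurd hc Sum.not_inl_le_inr

lemma isMax_inr_iff {b : β} : IsMax (Sum.inr b : α ⊕ β) ↔ IsMax b := by
  constructor
  · intro h c hc
    exact Sum.inr_le_inr_iff.1 (h (Sum.inr_le_inr_iff.2 hc))
  · intro h c hc
    cases c with
    | inl a => exact absurd hc Sum.not_inr_le_inl
    | inr a => exact Sum.inr_le_inr_iff.2 (h (Sum.inr_le_inr_iff.1 hc))

lemma Mset_inl (x : α) : Mset (Sum.inl x : α ⊕ β) = Sum.inl '' Mset x := by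
  ext y
  cases y with
  | inl a =>
    simp only [Mset, Set.mem_setOf_eq, isMax_inl_iff, Sum.inl_le_inl_iff, Set.mem_image]
    constructor
    · intro h; exact ⟨a, h, rfl⟩
    · rintro ⟨b, hb, h⟩; exact (Sum.inl.inj h) ▸ hb
  | inr b =>
    simp only [Mset, Set.mem_setOf_eq, Set.mem_image]
    constructor
    · rintro ⟨-, h⟩; exact absurd h Sum.not_inl_le_inr
    · rintro ⟨c, -, h⟩; exact absurd h (by simp)

lemma Mset_inr (x : β) : Mset (Sum.inr x : α ⊕ β) = Sum.inr '' Mset x := by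
  ext y
  cases y with
  | inr a =>
    simp only [Mset, Set.mem_setOf_eq, isMax_inr_iff, Sum.inr_le_inr_iff, Set.mem_image]
    constructor
    · intro h; exact ⟨a, h, rfl⟩
    · rintro ⟨b, hb, h⟩; exact (Sum.inr.inj h) ▸ hb
  | inl b =>
    simp only [Mset, Set.mem_setOf_eq, Set.mem_image]
    constructor
    · rintro ⟨-, h⟩; exact absurd h Sum.not_inr_le_inl
    · rintro ⟨c, -, h⟩; exact absurd h (by simp)

lemma sum_pp {h₁ : α → γ} {h₂ : β → γ} (H₁ : IsPP h₁) (H₂ : IsPP h₂) :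
    IsPP (Sum.elim h₁ h₂) := by
  constructor
  · rintro (a | a) (b | b) hab
    · exact H₁.1 (Sum.inl_le_inl_iff.1 hab)
    · exact absurd hab Sum.not_inl_le_inr
    · exact absurd hab Sum.not_inr_le_inl
    · exact H₂.1 (Sum.inr_le_inr_iff.1 hab)
  · rintro (a | a)
    · rw [Sum.elim_inl, H₁.2, Mset_inl, Set.image_image]; rfl
    · rw [Sum.elim_inr, H₂.2, Mset_inr, Set.image_image]; rfl

end SumAux

section Concrete

abbrev Mnat : Set ℕ := {1, 2, 3}

lemma hMnat : Mnat.Nonempty := ⟨1, by simp⟩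

lemma goodP : GoodF Mnat ({{1, 2}} : Set (Set ℕ)) := by
  rintro S hS
  rw [Set.mem_singleton_iff] at hS
  subst hS
  exact ⟨⟨1, by simp⟩, by rintro x (rfl | rfl) <;> simp⟩

lemma goodQ : GoodF Mnat ({{1, 2}, {2, 3}} : Set (Set ℕ)) := by
  rintro S (rfl | rfl)
  · exact ⟨⟨1, by simp⟩, by rintro x (rfl | rfl) <;> simp⟩
  · exact ⟨⟨2, by simp⟩, by rintro x (rfl | rfl) <;> simp⟩

lemma goodR : GoodF Mnat ({{1, 2}, {1, 3}, {2, 3}} : Set (Set ℕ)) := by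
  rintro S (rfl | rfl | rfl)
  · exact ⟨⟨1, by simp⟩, by rintro x (rfl | rfl) <;> simp⟩
  · exact ⟨⟨1, by simp⟩, by rintro x (rfl | rfl) <;> simp⟩
  · exact ⟨⟨2, by simp⟩, by rintro x (rfl | rfl) <;> simp⟩

lemma sw13M : ⇑(Equiv.swap (1:ℕ) 3) '' Mnat = Mnat := by
  rw [show Mnat = {1,2,3} from rfl, Set.image_insert_eq, Set.image_insert_eq,
      Set.image_singleton, Equiv.swap_apply_left, Equiv.swap_apply_right,
      Equiv.swap_apply_of_ne_of_ne (by norm_num) (by norm_num)]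
  ext x; simp; tauto

lemma sw13P : ⇑(Equiv.swap (1:ℕ) 3) '' {1, 2} = {2, 3} := by
  rw [Set.image_insert_eq, Set.image_singleton, Equiv.swap_apply_left,
      Equiv.swap_apply_of_ne_of_ne (by norm_num) (by norm_num)]
  exact Set.pair_comm 3 2

lemma sw23M : ⇑(Equiv.swap (2:ℕ) 3) '' Mnat = Mnat := by
  rw [show Mnat = {1,2,3} from rfl, Set.image_insert_eq, Set.image_insert_eq,
      Set.image_singleton, Equiv.swap_apply_left, Equiv.swap_apply_right,
      Equiv.swap_apply_of_ne_of_ne (by norm_num) (by norm_num)]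
  ext x; simp; tauto

lemma sw23a : ⇑(Equiv.swap (2:ℕ) 3) '' {1, 2} = {1, 3} := by
  rw [Set.image_insert_eq, Set.image_singleton, Equiv.swap_apply_left,
      Equiv.swap_apply_of_ne_of_ne (by norm_num) (by norm_num)]

lemma sw23b : ⇑(Equiv.swap (2:ℕ) 3) '' {2, 3} = {2, 3} := by
  rw [Set.image_insert_eq, Set.image_singleton, Equiv.swap_apply_left,
      Equiv.swap_apply_right]
  exact Set.pair_comm 3 2

lemma idM : (id : ℕ → ℕ) '' Mnat = Mnat := Set.image_id _

lemma hPQ1 : ∀ S ∈ ({{1, 2}} : Set (Set ℕ)), (id : ℕ → ℕ) '' S ∈ ({{1, 2}, {2, 3}} : Set (Set ℕ)) := by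
  rintro S hS
  rw [Set.mem_singleton_iff] at hS
  subst hS
  rw [Set.image_id]
  exact Or.inl rfl

lemma hPQ2 : ∀ S ∈ ({{1, 2}} : Set (Set ℕ)), ⇑(Equiv.swap (1:ℕ) 3) '' S ∈ ({{1, 2}, {2, 3}} : Set (Set ℕ)) := by
  rintro S hS
  rw [Set.mem_singleton_iff] at hS
  subst hS
  rw [sw13P]
  exact Or.inr rfl

lemma hQR1 : ∀ S ∈ ({{1, 2}, {2, 3}} : Set (Set ℕ)), (id : ℕ → ℕ) '' S ∈ ({{1, 2}, {1, 3}, {2, 3}} : Set (Set ℕ)) := by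
  rintro S (rfl | rfl) <;> rw [Set.image_id]
  · exact Or.inl rfl
  · exact Or.inr (Or.inr rfl)

lemma hQR2 : ∀ S ∈ ({{1, 2}, {2, 3}} : Set (Set ℕ)), ⇑(Equiv.swap (2:ℕ) 3) '' S ∈ ({{1, 2}, {1, 3}, {2, 3}} : Set (Set ℕ)) := by
  rintro S (rfl | rfl)
  · rw [sw23a]; exact Or.inr (Or.inl rfl)
  · rw [sw23b]; exact Or.inr (Or.inr rfl)

end Concrete

/-- There are surjective pp-morphisms `P ⊎ P ↠ Q` and `Q ⊎ Q ↠ R` for the three reduced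
posets `P = P({1,2,3},{{1,2}})`, `Q = P({1,2,3},{{1,2},{2,3}})`,
`R = P({1,2,3},{{1,2},{1,3},{2,3}})`. -/
theorem stmt18 :
    (∃ h : Red ({1, 2, 3} : Set ℕ) ({{1, 2}} : Set (Set ℕ)) ⊕
           Red ({1, 2, 3} : Set ℕ) ({{1, 2}} : Set (Set ℕ)) →
        Red ({1, 2, 3} : Set ℕ) ({{1, 2}, {2, 3}} : Set (Set ℕ)),
      Function.Surjective h ∧ IsPP h) ∧
    (∃ k : Red ({1, 2, 3} : Set ℕ) ({{1, 2}, {2, 3}} : Set (Set ℕ)) ⊕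
           Red ({1, 2, 3} : Set ℕ) ({{1, 2}, {2, 3}} : Set (Set ℕ)) →
        Red ({1, 2, 3} : Set ℕ) ({{1, 2}, {1, 3}, {2, 3}} : Set (Set ℕ)),
      Function.Surjective k ∧ IsPP k) := by
  constructor
  · refine ⟨Sum.elim (pmap id idM hPQ1) (pmap (⇑(Equiv.swap (1:ℕ) 3)) sw13M hPQ2), ?_, ?_⟩
    · intro y
      rcases y.2 with h | ⟨m, hmM, h⟩ | (h | h)
      · exact ⟨Sum.inl (botElem _ _), Subtype.ext (by show (id : ℕ → ℕ) '' Mnat = y.1; rw [idM, h])⟩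
      · exact ⟨Sum.inl (singElem _ _ hmM), Subtype.ext (by show (id : ℕ → ℕ) '' {m} = y.1; rw [Set.image_id, h])⟩
      · exact ⟨Sum.inl ⟨{1, 2}, Or.inr (Or.inr rfl)⟩, Subtype.ext (by show (id : ℕ → ℕ) '' {1, 2} = y.1; rw [Set.image_id, h])⟩
      · exact ⟨Sum.inr ⟨{1, 2}, Or.inr (Or.inr rfl)⟩, Subtype.ext (by show ⇑(Equiv.swap (1:ℕ) 3) '' {1, 2} = y.1; rw [sw13P, h])⟩
    · exact sum_pp
        (pmap_pp _ injective_id idM hPQ1 hMnat goodP goodQ)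
        (pmap_pp _ (Equiv.swap (1:ℕ) 3).injective sw13M hPQ2 hMnat goodP goodQ)
  · refine ⟨Sum.elim (pmap id idM hQR1) (pmap (⇑(Equiv.swap (2:ℕ) 3)) sw23M hQR2), ?_, ?_⟩
    · intro y
      rcases y.2 with h | ⟨m, hmM, h⟩ | (h | h | h)
      · exact ⟨Sum.inl (botElem _ _), Subtype.ext (by show (id : ℕ → ℕ) '' Mnat = y.1; rw [idM, h])⟩
      · exact ⟨Sum.inl (singElem _ _ hmM), Subtype.ext (by show (id : ℕ → ℕ) '' {m} = y.1; rw [Set.image_id, h])⟩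
      · exact ⟨Sum.inl ⟨{1, 2}, Or.inr (Or.inr (Or.inl rfl))⟩, Subtype.ext (by show (id : ℕ → ℕ) '' {1, 2} = y.1; rw [Set.image_id, h])⟩
      · exact ⟨Sum.inr ⟨{1, 2}, Or.inr (Or.inr (Or.inl rfl))⟩, Subtype.ext (by show ⇑(Equiv.swap (2:ℕ) 3) '' {1, 2} = y.1; rw [sw23a, h])⟩
      · exact ⟨Sum.inl ⟨{2, 3}, Or.inr (Or.inr (Or.inr rfl))⟩, Subtype.ext (by show (id : ℕ → ℕ) '' {2, 3} = y.1; rw [Set.image_id, h])⟩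
    · exact sum_pp
        (pmap_pp _ injective_id idM hQR1 hMnat goodQ goodR)
        (pmap_pp _ (Equiv.swap (2:ℕ) 3).injective sw23M hQR2 hMnat goodQ goodR)
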